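/- Let q be a prime power, F_q a finite field with q elements, let k ≥ 1, and let Q ∈ F_q[t] be a squarefree polynomial of degree d ≥ 2. If n > k(d−1), then the sum S_{d_k,n,Q}(A) := Σ_{f ∈ M_n, f ≡ A mod Q} d_k(f) is independent of A among residues coprime to Q; that is, for all A, B ∈ F_q[t] with gcd(A,Q) = gcd(B,Q) = 1, S_{d_k,n,Q}(A) = S_{d_k,n,Q}(B). -/

import Mathlib

open Polynomial

/-- The `k`-th divisor function of a polynomial: the number of `k`-tuples of monic
polynomials whose product is `f`. -/
noncomputable def dpoly (F : Type) [Field F] (k : ℕ) (f : Polynomial F) : ℕ :=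
  Set.ncard {t : Fin k → Polynomial F | (∀ i, (t i).Monic) ∧ ∏ i, t i = f}

/-- The monic polynomial `X^n + ∑_{i<n} aᵢ X^i`; as `a` ranges over `Fin n → F`, this
ranges bijectively over all monic polynomials of degree `n`. -/
noncomputable def monicOf (F : Type) [Field F] (n : ℕ) (a : Fin n → F) : Polynomial F :=
  Polynomial.X ^ n + ∑ i : Fin n, Polynomial.C (a i) * Polynomial.X ^ (i : ℕ)

/-- The sum `N_{d_k}(A;h) = ∑_{f ∈ I(A;h)} d_k(f)` of the `k`-th divisor function over the
short interval `I(A;h) = {f : deg(f - A) ≤ h}`, parametrized as `f = A + ∑_{i ≤ h} gᵢ X^i`. -/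
noncomputable def Nshort (F : Type) [Field F] [Fintype F] (k h : ℕ) (A : Polynomial F) : ℕ :=
  ∑ g : Fin (h + 1) → F,
    dpoly F k (A + ∑ i : Fin (h + 1), Polynomial.C (g i) * Polynomial.X ^ (i : ℕ))
open scoped Classical

/-- The sum `S_{d_k,n,Q}(A) = ∑_{f ∈ M_n, f ≡ A mod Q} d_k(f)` of the `k`-th divisor function
over monic polynomials of degree `n` in the arithmetic progression `A mod Q`. -/
noncomputable def Sap (F : Type) [Field F] [Fintype F] (k n : ℕ) (Q A : Polynomial F) : ℝ :=
  ∑ a ∈ Finset.univ.filter (fun a : Fin n → F => Q ∣ (monicOf F n a - A)),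
    (dpoly F k (monicOf F n a) : ℝ)

/-- The polynomial `∑_{i<d} bᵢ X^i` of degree `< d`; as `b` ranges over `Fin d → F`, this
ranges bijectively over the residues modulo a polynomial `Q` of degree `d`. -/
noncomputable def resPoly (F : Type) [Field F] (d : ℕ) (b : Fin d → F) : Polynomial F :=
  ∑ i : Fin d, Polynomial.C (b i) * Polynomial.X ^ (i : ℕ)

/-- The residues modulo `Q` (a polynomial of degree `d`) that are coprime to `Q`,
represented by polynomials of degree `< d`.  Its cardinality is `Φ(Q)`. -/
noncomputable def residues (F : Type) [Field F] [Fintype F] (d : ℕ) (Q : Polynomial F) :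
    Finset (Fin d → F) :=
  Finset.univ.filter fun b => IsCoprime (resPoly F d b) Q

/-- The mean `⟨S_{d_k,n,Q}⟩ = Φ(Q)⁻¹ ∑_{A mod Q, (A,Q)=1} S_{d_k,n,Q}(A)`. -/
noncomputable def meanSap (F : Type) [Field F] [Fintype F] (k n d : ℕ) (Q : Polynomial F) : ℝ :=
  (1 / ((residues F d Q).card : ℝ)) * ∑ b ∈ residues F d Q, Sap F k n Q (resPoly F d b)

/-- The variance `Var_Q(S_{d_k,n,Q}) = Φ(Q)⁻¹ ∑_{A mod Q, (A,Q)=1} |S_{d_k,n,Q}(A) - ⟨S⟩|²`. -/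
noncomputable def VarAP (F : Type) [Field F] [Fintype F] (k n d : ℕ) (Q : Polynomial F) : ℝ :=
  (1 / ((residues F d Q).card : ℝ)) *
    ∑ b ∈ residues F d Q, (Sap F k n Q (resPoly F d b) - meanSap F k n d Q) ^ 2


variable (F : Type) [Field F]

lemma coeff_monicOf_lt {n : ℕ} (a : Fin n → F) (j : Fin n) :
    (monicOf F n a).coeff j = a j := by
  simp only [monicOf, coeff_add, Polynomial.finset_sum_coeff, coeff_C_mul, coeff_X_pow]
  rw [if_neg (Nat.ne_of_lt j.2), Finset.sum_eq_single j] <;>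
    simp +contextual [Fin.val_eq_val, eq_comm]

lemma coeff_monicOf_self {n : ℕ} (a : Fin n → F) :
    (monicOf F n a).coeff n = 1 := by
  simp only [monicOf, coeff_add, Polynomial.finset_sum_coeff, coeff_C_mul, coeff_X_pow]
  rw [Finset.sum_eq_zero]
  · simp
  · intro i _
    rw [if_neg (by omega : ¬ n = (i:ℕ)), mul_zero]

lemma coeff_monicOf_gt {n : ℕ} (a : Fin n → F) (j : ℕ) (hj : n < j) :
    (monicOf F n a).coeff j = 0 := by
  simp only [monicOf, coeff_add, Polynomial.finset_sum_coeff, coeff_C_mul, coeff_X_pow]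
  rw [if_neg (by omega : ¬ j = n), Finset.sum_eq_zero]
  · simp
  · intro i _
    have : (i:ℕ) < n := i.2
    rw [if_neg (by omega : ¬ j = (i:ℕ)), mul_zero]

lemma monic_monicOf {n : ℕ} (a : Fin n → F) : (monicOf F n a).Monic := by
  have : (monicOf F n a).natDegree ≤ n := by
    apply natDegree_le_iff_coeff_eq_zero.2
    exact fun j hj => coeff_monicOf_gt F a j hj
  rw [Monic, leadingCoeff]
  rcases lt_or_eq_of_le this with h | h
  · exfalso
    have := coeff_monicOf_self F a
    rw [coeff_eq_zero_of_natDegree_lt h] at this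
    simp at this
  · rw [h, coeff_monicOf_self]

lemma natDegree_monicOf {n : ℕ} (a : Fin n → F) : (monicOf F n a).natDegree = n := by
  have h1 : (monicOf F n a).natDegree ≤ n :=
    natDegree_le_iff_coeff_eq_zero.2 fun j hj => coeff_monicOf_gt F a j hj
  rcases lt_or_eq_of_le h1 with h | h
  · exfalso
    have := coeff_monicOf_self F a
    rw [coeff_eq_zero_of_natDegree_lt h] at this
    simp at this
  · exact h

lemma monicOf_inj {n : ℕ} (a b : Fin n → F) (h : monicOf F n a = monicOf F n b) : a = b := by
  funext j
  have := congrArg (fun p => Polynomial.coeff p j) h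
  simpa [coeff_monicOf_lt] using this

lemma monicOf_coeff_eq {n : ℕ} (f : Polynomial F) (hf : f.Monic) (hdeg : f.natDegree = n) :
    monicOf F n (fun i => f.coeff i) = f := by
  ext j
  rcases lt_trichotomy j n with h | h | h
  · rw [coeff_monicOf_lt F _ ⟨j, h⟩]
  · subst h
    rw [coeff_monicOf_self]
    exact (hdeg ▸ hf.coeff_natDegree).symm
  · rw [coeff_monicOf_gt F _ j h, coeff_eq_zero_of_natDegree_lt (hdeg ▸ h)]
variable {F : Type} [Field F]

noncomputable def psiTw (Q' U f : Polynomial F) : Polynomial F :=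
  f - f %ₘ Q' + (U * f) %ₘ Q'

lemma modByMonic_congr {Q' p q : Polynomial F} (hQ : Q'.Monic) (h : Q' ∣ p - q) :
    p %ₘ Q' = q %ₘ Q' := by
  have h0 : (p - q) %ₘ Q' = 0 := (Polynomial.modByMonic_eq_zero_iff_dvd hQ).2 h
  rw [Polynomial.sub_modByMonic] at h0
  exact sub_eq_zero.mp h0

lemma dvd_sub_modByMonic (Q' p : Polynomial F) (hQ : Q'.Monic) : Q' ∣ p - p %ₘ Q' := by
  rw [Polynomial.modByMonic_eq_sub_mul_div p Q']
  ring_nf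
  exact Dvd.intro _ rfl

lemma dvd_psiTw_sub (Q' U f : Polynomial F) (hQ : Q'.Monic) : Q' ∣ psiTw Q' U f - U * f := by
  have h1 := dvd_sub_modByMonic Q' f hQ
  have h2 := dvd_sub_modByMonic Q' (U * f) hQ
  have : psiTw Q' U f - U * f = (f - f %ₘ Q') - ((U*f) - (U*f) %ₘ Q') := by
    rw [psiTw]; ring
  rw [this]
  exact dvd_sub h1 h2

lemma psiTw_psiTw {Q' U U' : Polynomial F} (hQ : Q'.Monic) (hUU : Q' ∣ U * U' - 1)
    (f : Polynomial F) : psiTw Q' U' (psiTw Q' U f) = f := by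
  have h1 : (psiTw Q' U f) %ₘ Q' = (U * f) %ₘ Q' :=
    modByMonic_congr hQ (dvd_psiTw_sub Q' U f hQ)
  have h2 : (U' * psiTw Q' U f) %ₘ Q' = f %ₘ Q' := by
    apply modByMonic_congr hQ
    have d1 : Q' ∣ U' * (psiTw Q' U f - U * f) := Dvd.dvd.mul_left (dvd_psiTw_sub Q' U f hQ) U'
    have d2 : Q' ∣ (U * U' - 1) * f := Dvd.dvd.mul_right hUU f
    have : U' * psiTw Q' U f - f = U' * (psiTw Q' U f - U * f) + (U * U' - 1) * f := by ring
    rw [this]; exact dvd_add d1 d2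
  rw [psiTw, h1, h2, psiTw]
  ring

lemma psiTw_monic {Q' U f : Polynomial F} (hQ : Q'.Monic) (hQd : 1 ≤ Q'.natDegree)
    (hf : f.Monic) (hdf : Q'.natDegree ≤ f.natDegree) :
    (psiTw Q' U f).Monic ∧ (psiTw Q' U f).natDegree = f.natDegree := by
  have hQ0 : Q' ≠ 0 := hQ.ne_zero
  have hf0 : f ≠ 0 := hf.ne_zero
  have hdeg : Q'.degree ≤ f.degree := by
    rw [Polynomial.degree_eq_natDegree hQ0, Polynomial.degree_eq_natDegree hf0]
    exact_mod_cast hdf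
  have hr : (-(f %ₘ Q') + (U * f) %ₘ Q').degree < f.degree := by
    apply lt_of_le_of_lt (Polynomial.degree_add_le _ _)
    apply max_lt <;>
      [skip; exact lt_of_lt_of_le (Polynomial.degree_modByMonic_lt _ hQ) hdeg]
    rw [Polynomial.degree_neg]
    exact lt_of_lt_of_le (Polynomial.degree_modByMonic_lt _ hQ) hdeg
  have heq : psiTw Q' U f = f + (-(f %ₘ Q') + (U * f) %ₘ Q') := by rw [psiTw]; ring
  constructor
  · rw [heq]; exact hf.add_of_left hr
  · rw [heq, Polynomial.natDegree_add_eq_left_of_degree_lt hr]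

def Ttup (F : Type) [Field F] (k n : ℕ) (Q A : Polynomial F) : Set (Fin k → Polynomial F) :=
  {t | (∀ i, (t i).Monic) ∧ (∏ i, t i).natDegree = n ∧ Q ∣ (∏ i, t i) - A}

noncomputable def idxAux {F : Type} [Field F] {k : ℕ} (d : ℕ) (hk : 0 < k)
    (t : Fin k → Polynomial F) : Fin k :=
  if h : (Finset.univ.filter fun i => d ≤ (t i).natDegree).Nonempty then
    (Finset.univ.filter fun i => d ≤ (t i).natDegree).min' h
  else ⟨0, hk⟩

noncomputable def PhiTw {F : Type} [Field F] {k : ℕ} (d : ℕ) (hk : 0 < k)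
    (Q' U : Polynomial F) (t : Fin k → Polynomial F) : Fin k → Polynomial F :=
  Function.update t (idxAux d hk t) (psiTw Q' U (t (idxAux d hk t)))

lemma idxAux_congr {F : Type} [Field F] {k : ℕ} {d : ℕ} (hk : 0 < k)
    {t s : Fin k → Polynomial F} (h : ∀ i, (t i).natDegree = (s i).natDegree) :
    idxAux d hk t = idxAux d hk s := by
  unfold idxAux
  have he : (Finset.univ.filter fun i => d ≤ (t i).natDegree)
      = (Finset.univ.filter fun i => d ≤ (s i).natDegree) :=
    Finset.filter_congr (by simp [h])
  simp_rw [he]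

section Main
variable {F : Type} [Field F] {k d n : ℕ} {Q Q' U A B : Polynomial F}

lemma idx_filter_nonempty (hk : 0 < k) (hd : 2 ≤ d) (hn : k * (d - 1) < n)
    {t : Fin k → Polynomial F} (ht : t ∈ Ttup F k n Q A) :
    (Finset.univ.filter fun i => d ≤ (t i).natDegree).Nonempty := by
  by_contra hne
  have hall : ∀ i, (t i).natDegree ≤ d - 1 := by
    intro i
    by_contra hcon
    exact hne ⟨i, Finset.mem_filter.2 ⟨Finset.mem_univ i, by omega⟩⟩
  have hdeg : (∏ i, t i).natDegree = ∑ i, (t i).natDegree :=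
    Polynomial.natDegree_prod _ _ (fun i _ => (ht.1 i).ne_zero)
  have : (∏ i, t i).natDegree ≤ k * (d - 1) := by
    rw [hdeg]
    calc ∑ i, (t i).natDegree ≤ ∑ _i : Fin k, (d-1) := Finset.sum_le_sum (fun i _ => hall i)
    _ = k * (d-1) := by simp [Finset.sum_const, mul_comm]
  rw [ht.2.1] at this
  omega

lemma idxAux_deg (hk : 0 < k) (hd : 2 ≤ d) (hn : k * (d - 1) < n)
    {t : Fin k → Polynomial F} (ht : t ∈ Ttup F k n Q A) :
    d ≤ (t (idxAux d hk t)).natDegree := by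
  have h := idx_filter_nonempty hk hd hn ht
  rw [idxAux, dif_pos h]
  exact (Finset.mem_filter.1 (Finset.min'_mem _ h)).2

lemma PhiTw_deg (hk : 0 < k) (hd : 2 ≤ d) (hn : k * (d - 1) < n)
    (hQ'm : Q'.Monic) (hQ'd : Q'.natDegree = d)
    {t : Fin k → Polynomial F} (ht : t ∈ Ttup F k n Q A) (i : Fin k) :
    ((PhiTw d hk Q' U t) i).natDegree = (t i).natDegree := by
  rw [PhiTw]
  rcases eq_or_ne i (idxAux d hk t) with h | h
  · subst h
    rw [Function.update_self]
    exact (psiTw_monic hQ'm (by omega) (ht.1 _) (hQ'd ▸ idxAux_deg hk hd hn ht)).2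
  · rw [Function.update_of_ne h]

lemma PhiTw_mem (hk : 0 < k) (hd : 2 ≤ d) (hn : k * (d - 1) < n)
    (hQ'm : Q'.Monic) (hQ'd : Q'.natDegree = d) (hdvd : ∀ x, Q ∣ x ↔ Q' ∣ x)
    (hUA : Q ∣ U * A - B)
    {t : Fin k → Polynomial F} (ht : t ∈ Ttup F k n Q A) :
    PhiTw d hk Q' U t ∈ Ttup F k n Q B := by
  set i := idxAux d hk t with hi
  have hdi : d ≤ (t i).natDegree := idxAux_deg hk hd hn ht
  have hpsi := psiTw_monic (U := U) hQ'm (by omega) (ht.1 i) (hQ'd ▸ hdi)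
  have hmon : ∀ j, ((PhiTw d hk Q' U t) j).Monic := by
    intro j
    rcases eq_or_ne j i with h | h
    · subst h; rw [PhiTw, ← hi, Function.update_self]; exact hpsi.1
    · rw [PhiTw, ← hi, Function.update_of_ne h]; exact ht.1 j
  have hprod : (∏ j, PhiTw d hk Q' U t j)
      = psiTw Q' U (t i) * ∏ j ∈ Finset.univ.erase i, t j := by
    rw [PhiTw, ← hi, Finset.prod_update_of_mem (Finset.mem_univ i),
      Finset.sdiff_singleton_eq_erase]
  have hprodt : (∏ j, t j) = t i * ∏ j ∈ Finset.univ.erase i, t j :=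
    (Finset.mul_prod_erase _ _ (Finset.mem_univ i)).symm
  refine ⟨hmon, ?_, ?_⟩
  · have h1 : (∏ j, PhiTw d hk Q' U t j).natDegree = ∑ j, ((PhiTw d hk Q' U t) j).natDegree :=
      Polynomial.natDegree_prod _ _ (fun j _ => (hmon j).ne_zero)
    have h2 : (∏ j, t j).natDegree = ∑ j, (t j).natDegree :=
      Polynomial.natDegree_prod _ _ (fun j _ => (ht.1 j).ne_zero)
    rw [h1, Finset.sum_congr rfl (fun j _ => PhiTw_deg hk hd hn hQ'm hQ'd ht j), ← h2]
    exact ht.2.1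
  · have d1 : Q ∣ (psiTw Q' U (t i) - U * (t i)) * ∏ j ∈ Finset.univ.erase i, t j :=
      Dvd.dvd.mul_right ((hdvd _).2 (dvd_psiTw_sub Q' U (t i) hQ'm)) _
    have d2 : Q ∣ U * ((∏ j, t j) - A) := Dvd.dvd.mul_left ht.2.2 U
    have heq : (∏ j, PhiTw d hk Q' U t j) - B
        = (psiTw Q' U (t i) - U * (t i)) * (∏ j ∈ Finset.univ.erase i, t j)
          + U * ((∏ j, t j) - A) + (U * A - B) := by
      rw [hprod, hprodt]; ring
    rw [heq]
    exact dvd_add (dvd_add d1 d2) hUA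

lemma PhiTw_PhiTw (hk : 0 < k) (hd : 2 ≤ d) (hn : k * (d - 1) < n)
    (hQ'm : Q'.Monic) (hQ'd : Q'.natDegree = d) (hdvd : ∀ x, Q ∣ x ↔ Q' ∣ x)
    {U' : Polynomial F} (hUU : Q ∣ U * U' - 1)
    {t : Fin k → Polynomial F} (ht : t ∈ Ttup F k n Q A) :
    PhiTw d hk Q' U' (PhiTw d hk Q' U t) = t := by
  have hidx : idxAux d hk (PhiTw d hk Q' U t) = idxAux d hk t :=
    idxAux_congr hk (PhiTw_deg hk hd hn hQ'm hQ'd ht)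
  set i := idxAux d hk t with hi
  have hval : (PhiTw d hk Q' U t) i = psiTw Q' U (t i) := by
    rw [PhiTw, ← hi, Function.update_self]
  rw [PhiTw, hidx, hval]
  funext j
  rcases eq_or_ne j i with h | h
  · subst h
    rw [Function.update_self, psiTw_psiTw hQ'm ((hdvd _).1 hUU)]
  · rw [Function.update_of_ne h, PhiTw, Function.update_of_ne (hi ▸ h)]

end Main


section Part4
variable {F : Type} [Field F] [Fintype F]

lemma finite_natDegree_le (n : ℕ) : {p : Polynomial F | p.natDegree ≤ n}.Finite := by
  apply Set.Finite.of_finite_image (f := fun p => fun i : Fin (n+1) => p.coeff i)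
    (Set.toFinite _)
  intro p hp q hq h
  ext j
  rcases le_or_gt j n with hj | hj
  · exact congrFun h ⟨j, by omega⟩
  · rw [Polynomial.coeff_eq_zero_of_natDegree_lt (lt_of_le_of_lt hp hj),
      Polynomial.coeff_eq_zero_of_natDegree_lt (lt_of_le_of_lt hq hj)]

lemma Dset_finite {k : ℕ} (f : Polynomial F) (hf : f ≠ 0) :
    {t : Fin k → Polynomial F | (∀ i, (t i).Monic) ∧ ∏ i, t i = f}.Finite := by
  apply Set.Finite.subset
    (Set.Finite.pi (fun _ : Fin k => finite_natDegree_le (n := f.natDegree)))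
  intro t ht i _
  exact Polynomial.natDegree_le_of_dvd (ht.2 ▸ Finset.dvd_prod_of_mem t (Finset.mem_univ i)) hf

lemma Ttup_finite {k n : ℕ} (Q A : Polynomial F) : (Ttup F k n Q A).Finite := by
  apply Set.Finite.subset
    (Set.Finite.pi (fun _ : Fin k => finite_natDegree_le (n := n)))
  intro t ht i _
  have hm : (∏ i, t i).Monic := Polynomial.monic_prod_of_monic _ _ (fun i _ => ht.1 i)
  have := Polynomial.natDegree_le_of_dvd (Finset.dvd_prod_of_mem t (Finset.mem_univ i)) hm.ne_zero
  rw [ht.2.1] at this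
  exact this

lemma Sap_eq_ncard (k n : ℕ) (Q A : Polynomial F) :
    Sap F k n Q A = ((Ttup F k n Q A).ncard : ℝ) := by
  classical
  set s := Finset.univ.filter (fun a : Fin n → F => Q ∣ (monicOf F n a - A)) with hs
  set D := fun a : Fin n → F =>
    {t : Fin k → Polynomial F | (∀ i, (t i).Monic) ∧ ∏ i, t i = monicOf F n a} with hD
  have hDfin : ∀ a, (D a).Finite := fun a => Dset_finite _ (monic_monicOf F a).ne_zero
  have hUnion : Ttup F k n Q A = ⋃ a ∈ s, D a := by
    ext t
    constructor
    · rintro ⟨h1, h2, h3⟩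
      have hfm : (∏ i, t i).Monic := Polynomial.monic_prod_of_monic _ _ (fun i _ => h1 i)
      have key : monicOf F n (fun i => (∏ i, t i).coeff i) = ∏ i, t i :=
        monicOf_coeff_eq F _ hfm h2
      refine Set.mem_biUnion (Finset.mem_filter.2 ⟨Finset.mem_univ _, ?_⟩) ⟨h1, key.symm⟩
      rw [key]; exact h3
    · intro ht
      obtain ⟨a, ha, h1, h2⟩ := Set.mem_iUnion₂.1 ht
      refine ⟨h1, ?_, ?_⟩
      · rw [h2]; exact natDegree_monicOf F a
      · rw [h2]; exact (Finset.mem_filter.1 ha).2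
  have hcard : (Ttup F k n Q A).ncard = ∑ a ∈ s, (D a).ncard := by
    have hcoe : ((s.biUnion fun a => (hDfin a).toFinset : Finset (Fin k → Polynomial F)) :
        Set (Fin k → Polynomial F)) = Ttup F k n Q A := by
      rw [hUnion, Finset.coe_biUnion]
      simp [Set.Finite.coe_toFinset]
    rw [← hcoe, Set.ncard_coe_finset, Finset.card_biUnion, Finset.sum_congr rfl]
    · intro a _
      exact (Set.ncard_eq_toFinset_card _ (hDfin a)).symm
    · intro a _ b _ hab
      rw [Function.onFun, Finset.disjoint_left]
      intro t hta htb
      apply hab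
      apply monicOf_inj F
      rw [← ((hDfin a).mem_toFinset.1 hta).2, ← ((hDfin b).mem_toFinset.1 htb).2]
  rw [Sap, hcard]
  push_cast
  rfl

end Part4


theorem progression_sum_independent_of_residue (F : Type) [Field F] [Fintype F]
    (k d n : ℕ) (hk : 1 ≤ k) (hd : 2 ≤ d)
    (Q : Polynomial F) (hQsf : Squarefree Q) (hQdeg : Q.natDegree = d)
    (hn : k * (d - 1) < n)
    (A B : Polynomial F) (hA : IsCoprime A Q) (hB : IsCoprime B Q) :
    Sap F k n Q A = Sap F k n Q B := by
  have hQ0 : Q ≠ 0 := by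
    intro h
    rw [h, Polynomial.natDegree_zero] at hQdeg
    omega
  have hlc : Q.leadingCoeff ≠ 0 := Polynomial.leadingCoeff_ne_zero.2 hQ0
  set Q' : Polynomial F := Q * Polynomial.C (Q.leadingCoeff)⁻¹ with hQ'
  have hQ'm : Q'.Monic := Polynomial.monic_mul_leadingCoeff_inv hQ0
  have hQ'd : Q'.natDegree = d := by
    rw [hQ', Polynomial.natDegree_mul hQ0 (by simp [hlc]), Polynomial.natDegree_C, add_zero,
      hQdeg]
  have hdvd : ∀ x, Q ∣ x ↔ Q' ∣ x := by
    have h1 : Q ∣ Q' := Dvd.intro _ rfl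
    have h2 : Q' ∣ Q := ⟨Polynomial.C Q.leadingCoeff, by
      rw [hQ', mul_assoc, ← Polynomial.C_mul, inv_mul_cancel₀ hlc, Polynomial.C_1, mul_one]⟩
    exact fun x => ⟨fun h => h2.trans h, fun h => h1.trans h⟩
  obtain ⟨u, v, huv⟩ := hA
  obtain ⟨u', v', hu'v'⟩ := hB
  set U : Polynomial F := u * B with hU
  set U' : Polynomial F := u' * A with hU'def
  have hUA : Q ∣ U * A - B := ⟨-(v * B), by rw [hU]; linear_combination B * huv⟩
  have hU'B : Q ∣ U' * B - A := ⟨-(v' * A), by rw [hU'def]; linear_combination A * hu'v'⟩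
  have hUU : Q ∣ U * U' - 1 :=
    ⟨-v - v' + v * v' * Q, by
      rw [hU, hU'def]; linear_combination (u' * B) * huv + (1 - v * Q) * hu'v'⟩
  have hU'U : Q ∣ U' * U - 1 := by rw [mul_comm]; exact hUU
  have hk0 : 0 < k := hk
  have hmapsAB : Set.MapsTo (PhiTw d hk0 Q' U) (Ttup F k n Q A) (Ttup F k n Q B) :=
    fun t ht => PhiTw_mem hk0 hd hn hQ'm hQ'd hdvd hUA ht
  have hmapsBA : Set.MapsTo (PhiTw d hk0 Q' U') (Ttup F k n Q B) (Ttup F k n Q A) :=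
    fun t ht => PhiTw_mem hk0 hd hn hQ'm hQ'd hdvd hU'B ht
  have hinv : Set.InvOn (PhiTw d hk0 Q' U') (PhiTw d hk0 Q' U)
      (Ttup F k n Q A) (Ttup F k n Q B) := by
    constructor
    · intro t ht
      exact PhiTw_PhiTw hk0 hd hn hQ'm hQ'd hdvd hUU ht
    · intro t ht
      exact PhiTw_PhiTw hk0 hd hn hQ'm hQ'd hdvd hU'U ht
  have hbij : Set.BijOn (PhiTw d hk0 Q' U) (Ttup F k n Q A) (Ttup F k n Q B) :=
    hinv.bijOn hmapsAB hmapsBA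
  have hncard : (Ttup F k n Q A).ncard = (Ttup F k n Q B).ncard := by
    rw [← hbij.image_eq, Set.ncard_image_of_injOn hbij.injOn]
  rw [Sap_eq_ncard, Sap_eq_ncard, hncard]
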